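/- Given Hilbert spaces V, Q, a coercive bounded sesquilinear form a on V×V and a bounded form b on V×Q satisfying the inf-sup condition sup_{v∈V, v≠0} |b(v,q)|/‖v‖_V ≥ β̄‖q‖_Q for all q ∈ Q with β̄ > 0, the combined form A((u,p),(v,q)) := a(u,v)+b(v,p)−b(u,q) on X := V×Q satisfies a uniform inf-sup condition: there exists γ > 0 such that for all (w,r) ∈ X, sup_{(v,q)∈X, (v,q)≠0} |A((v,q),(w,r))|/‖(v,q)‖_X ≥ γ‖(w,r)‖_X. -/

import Mathlib

private lemma aux_quad (α βb Ca δ c W R : ℝ) (hα : 0 < α) (hβb : 0 < βb) (hCa : 0 < Ca)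
    (hδ : δ * Ca ^ 2 = α * βb)
    (hc1 : c ≤ α / 2) (hc2 : c ≤ δ * βb / 2) :
    c * (W ^ 2 + R ^ 2) ≤ α * W ^ 2 - (δ * R) * Ca * W + (δ * R) * (βb * R) := by
  have key : Ca ^ 2 * ((α * W ^ 2 - (δ * R) * Ca * W + (δ * R) * (βb * R))
      - (α / 2 * W ^ 2 + δ * βb / 2 * R ^ 2)) = α / 2 * (Ca * W - βb * R) ^ 2 := by
    linear_combination (βb * R ^ 2 / 2 - Ca * W * R) * hδ
  have h0 : 0 ≤ Ca ^ 2 * ((α * W ^ 2 - (δ * R) * Ca * W + (δ * R) * (βb * R))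
      - (α / 2 * W ^ 2 + δ * βb / 2 * R ^ 2)) := by
    rw [key]; positivity
  have h1 : α / 2 * W ^ 2 + δ * βb / 2 * R ^ 2
      ≤ α * W ^ 2 - (δ * R) * Ca * W + (δ * R) * (βb * R) := by
    nlinarith [h0, mul_pos hCa hCa]
  nlinarith [mul_le_mul_of_nonneg_right hc1 (sq_nonneg W),
    mul_le_mul_of_nonneg_right hc2 (sq_nonneg R)]

private lemma aux_norm (δ nv W R : ℝ) (hnv0 : 0 ≤ nv) (hnv : nv ≤ W + δ * R) :
    nv ^ 2 + R ^ 2 ≤ (2 + 2 * δ ^ 2) * (W ^ 2 + R ^ 2) := by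
  nlinarith [sq_nonneg (W - δ * R), sq_nonneg R, pow_le_pow_left₀ hnv0 hnv 2]

/-- abstract inf-sup for the combined form
`A((u,p),(v,q)) := a(u,v) + b(v,p) − b(u,q)` on `X = V × Q`, given a bounded
coercive form `a` and a bounded form `b` satisfying an inf-sup condition. -/
theorem combined_form_infSup
    {V Q : Type*} [NormedAddCommGroup V] [InnerProductSpace ℂ V] [CompleteSpace V]
    [NormedAddCommGroup Q] [InnerProductSpace ℂ Q] [CompleteSpace Q]
    (a : V →ₗ[ℂ] V →ₗ⋆[ℂ] ℂ) (b : V →ₗ[ℂ] Q →ₗ⋆[ℂ] ℂ)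
    (Ca : ℝ) (hCa : ∀ u v, ‖a u v‖ ≤ Ca * ‖u‖ * ‖v‖)
    (α : ℝ) (hα : 0 < α) (hcoer : ∀ v : V, α * ‖v‖ ^ 2 ≤ (a v v).re)
    (Cb : ℝ) (hCb : ∀ v q, ‖b v q‖ ≤ Cb * ‖v‖ * ‖q‖)
    (βb : ℝ) (hβb : 0 < βb)
    (hinfsup : ∀ q : Q, ∃ v : V, ‖v‖ = 1 ∧ βb * ‖q‖ ≤ ‖b v q‖) :
    ∃ γ > 0, ∀ (w : V) (r : Q), ∃ (v : V) (q : Q), ¬(v = 0 ∧ q = 0) ∧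
      γ * Real.sqrt (‖w‖ ^ 2 + ‖r‖ ^ 2) * Real.sqrt (‖v‖ ^ 2 + ‖q‖ ^ 2) ≤
        ‖a v w + b w q - b v r‖ := by
  -- a unit vector of V (exists thanks to `hinfsup 0`)
  obtain ⟨v₀, hv₀, -⟩ := hinfsup 0
  -- `α ≤ Ca`, in particular `Ca > 0`
  have hCa' : α ≤ Ca := by
    have h1 := hcoer v₀
    have h2 := hCa v₀ v₀
    have h3 : (a v₀ v₀).re ≤ ‖a v₀ v₀‖ := Complex.re_le_norm _
    rw [hv₀] at h1 h2
    simp only [one_pow, mul_one] at h1 h2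
    linarith
  have hCapos : 0 < Ca := lt_of_lt_of_le hα hCa'
  obtain ⟨δ, hδdef⟩ : ∃ δ : ℝ, δ = α * βb / Ca ^ 2 := ⟨_, rfl⟩
  have hδpos : 0 < δ := by rw [hδdef]; positivity
  have hδCa : δ * Ca ^ 2 = α * βb := by rw [hδdef]; field_simp
  obtain ⟨c, hcdef⟩ : ∃ c : ℝ, c = min (α / 2) (δ * βb / 2) := ⟨_, rfl⟩
  have hcpos : 0 < c := by rw [hcdef]; exact lt_min (by positivity) (by positivity)
  have hc1 : c ≤ α / 2 := hcdef ▸ min_le_left _ _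
  have hc2 : c ≤ δ * βb / 2 := hcdef ▸ min_le_right _ _
  obtain ⟨K, hKdef⟩ : ∃ K : ℝ, K = 2 + 2 * δ ^ 2 := ⟨_, rfl⟩
  have hKpos : 0 < K := by rw [hKdef]; positivity
  have hsK : 0 < Real.sqrt K := Real.sqrt_pos.mpr hKpos
  refine ⟨c / Real.sqrt K, by positivity, fun w r => ?_⟩
  by_cases hwr : w = 0 ∧ r = 0
  · refine ⟨v₀, 0, ?_, ?_⟩
    · rintro ⟨h, -⟩
      rw [h] at hv₀; simp at hv₀
    · obtain ⟨hw, hr⟩ := hwr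
      subst hw; subst hr
      simp
  · obtain ⟨v₁, hv₁, hb₁⟩ := hinfsup r
    set β : ℂ := b v₁ r with hβdef
    set s : ℂ := if β = 0 then 0 else -(starRingEnd ℂ β) / ‖β‖ with hsdef
    have hsβ : s * β = -(‖β‖ : ℂ) := by
      by_cases h : β = 0
      · simp [hsdef, h]
      · have hβn : (‖β‖ : ℂ) ≠ 0 := by
          simpa using Complex.ofReal_ne_zero.mpr (norm_ne_zero_iff.mpr h)
        have hcm : (starRingEnd ℂ) β * β = ((‖β‖ : ℂ)) ^ 2 := by
          rw [← Complex.normSq_eq_conj_mul_self, Complex.normSq_eq_norm_sq]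
          push_cast; ring
        rw [hsdef, if_neg h, div_mul_eq_mul_div, neg_mul, hcm, pow_two, neg_div,
          mul_div_assoc, div_self hβn, mul_one]
    have hs1 : ‖s‖ ≤ 1 := by
      by_cases h : β = 0
      · simp [hsdef, h]
      · rw [hsdef, if_neg h]
        rw [norm_div, norm_neg, RingHomIsometric.norm_map]
        rw [Complex.norm_real, Real.norm_eq_abs, abs_of_nonneg (norm_nonneg _)]
        exact le_of_eq (div_self (norm_ne_zero_iff.mpr h))
    set t : ℝ := δ * ‖r‖ with htdef
    have ht0 : 0 ≤ t := by positivity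
    set v : V := w + ((t : ℂ) * s) • v₁ with hvdef
    refine ⟨v, r, ?_, ?_⟩
    · rintro ⟨hv, hr⟩
      apply hwr
      refine ⟨?_, hr⟩
      have h0 : t = 0 := by rw [htdef, hr]; simp
      rw [hvdef, h0] at hv
      simpa using hv
    · -- compute the combined form
      have hE : a v w + b w r - b v r
          = a w w + ((t : ℂ) * s) * (a v₁ w) + ((t : ℂ) * (‖β‖ : ℂ)) := by
        rw [hvdef]
        simp only [map_add, map_smul, LinearMap.add_apply, LinearMap.smul_apply,
          smul_eq_mul]
        rw [mul_assoc (t : ℂ) s β, hsβ]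
        ring
      -- lower bound on the real part of the middle term
      have hre1 : -(t * Ca * ‖w‖) ≤ (((t : ℂ) * s) * (a v₁ w)).re := by
        have h1 : ‖((t : ℂ) * s) * (a v₁ w)‖ ≤ t * Ca * ‖w‖ := by
          rw [norm_mul, norm_mul]
          have hnorm_t : ‖(t : ℂ)‖ = t := by
            rw [Complex.norm_real, Real.norm_eq_abs, abs_of_nonneg ht0]
          have h2 : ‖a v₁ w‖ ≤ Ca * ‖w‖ := by
            have := hCa v₁ w; rw [hv₁] at this; simpa using this
          calc ‖(t : ℂ)‖ * ‖s‖ * ‖a v₁ w‖ ≤ t * 1 * (Ca * ‖w‖) := by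
                rw [hnorm_t]
                apply mul_le_mul (by nlinarith [norm_nonneg s]) h2 (norm_nonneg _)
                positivity
            _ = t * Ca * ‖w‖ := by ring
        have h3 : |(((t : ℂ) * s) * (a v₁ w)).re| ≤ ‖((t : ℂ) * s) * (a v₁ w)‖ := by
          exact Complex.abs_re_le_norm _
        have h4 := neg_abs_le (((t : ℂ) * s) * (a v₁ w)).re
        linarith
      -- total lower bound on the real part
      have hreE : α * ‖w‖ ^ 2 - t * Ca * ‖w‖ + t * (βb * ‖r‖)
          ≤ (a v w + b w r - b v r).re := by
        rw [hE, Complex.add_re, Complex.add_re]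
        have h1 := hcoer w
        have h2 : t * (βb * ‖r‖) ≤ t * ‖β‖ := by
          apply mul_le_mul_of_nonneg_left _ ht0
          rw [hβdef]; exact hb₁
        have h5 : ((t : ℂ) * (‖β‖ : ℂ)).re = t * ‖β‖ := by
          rw [← Complex.ofReal_mul]; exact Complex.ofReal_re _
        rw [h5]
        linarith
      -- arithmetic lower bound
      have hquad : c * (‖w‖ ^ 2 + ‖r‖ ^ 2)
          ≤ α * ‖w‖ ^ 2 - t * Ca * ‖w‖ + t * (βb * ‖r‖) := by
        rw [htdef]
        exact aux_quad α βb Ca δ c ‖w‖ ‖r‖ hα hβb hCapos hδCa hc1 hc2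
      -- norm bound on the test pair
      have hT : ‖v‖ ^ 2 + ‖r‖ ^ 2 ≤ K * (‖w‖ ^ 2 + ‖r‖ ^ 2) := by
        have hnv : ‖v‖ ≤ ‖w‖ + δ * ‖r‖ := by
          rw [hvdef]
          refine le_trans (norm_add_le _ _) ?_
          have h6 : ‖((t : ℂ) * s) • v₁‖ ≤ t := by
            rw [norm_smul, norm_mul, hv₁, mul_one]
            have h7 : ‖(t : ℂ)‖ = t := by
              rw [Complex.norm_real, Real.norm_eq_abs, abs_of_nonneg ht0]
            nlinarith [norm_nonneg s]
          rw [htdef] at h6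
          linarith
        rw [hKdef]
        exact aux_norm δ ‖v‖ ‖w‖ ‖r‖ (norm_nonneg v) hnv
      have hsqT : Real.sqrt (‖v‖ ^ 2 + ‖r‖ ^ 2)
          ≤ Real.sqrt K * Real.sqrt (‖w‖ ^ 2 + ‖r‖ ^ 2) := by
        rw [← Real.sqrt_mul hKpos.le]
        exact Real.sqrt_le_sqrt hT
      have hSS : Real.sqrt (‖w‖ ^ 2 + ‖r‖ ^ 2) * Real.sqrt (‖w‖ ^ 2 + ‖r‖ ^ 2)
          = ‖w‖ ^ 2 + ‖r‖ ^ 2 := Real.mul_self_sqrt (by positivity)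
      have hfinal : (a v w + b w r - b v r).re ≤ ‖a v w + b w r - b v r‖ :=
        Complex.re_le_norm _
      calc c / Real.sqrt K * Real.sqrt (‖w‖ ^ 2 + ‖r‖ ^ 2) *
            Real.sqrt (‖v‖ ^ 2 + ‖r‖ ^ 2)
          ≤ c / Real.sqrt K * Real.sqrt (‖w‖ ^ 2 + ‖r‖ ^ 2) *
            (Real.sqrt K * Real.sqrt (‖w‖ ^ 2 + ‖r‖ ^ 2)) := by
            apply mul_le_mul_of_nonneg_left hsqT (by positivity)
        _ = c * (‖w‖ ^ 2 + ‖r‖ ^ 2) := by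
            have heq : c / Real.sqrt K * Real.sqrt (‖w‖ ^ 2 + ‖r‖ ^ 2) *
                (Real.sqrt K * Real.sqrt (‖w‖ ^ 2 + ‖r‖ ^ 2))
                = c * (Real.sqrt (‖w‖ ^ 2 + ‖r‖ ^ 2) * Real.sqrt (‖w‖ ^ 2 + ‖r‖ ^ 2)) *
                  (Real.sqrt K / Real.sqrt K) := by ring
            rw [heq, div_self (ne_of_gt hsK), mul_one, hSS]
        _ ≤ (a v w + b w r - b v r).re := le_trans hquad hreE
        _ ≤ ‖a v w + b w r - b v r‖ := hfinal
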